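/- Let f be C² with L-Lipschitz Hessian, B a symmetric matrix approximating ∇²f(x) such that ‖(∇²f(x) - B)d‖ ≤ C_H‖d‖^{1+ζ}, and suppose ∇f(x) + (B + λI)d = r with λ ≤ β‖d‖/α and ‖r‖ ≤ ξ‖d‖^{1+ζ}. Then ‖∇f(x+d)‖ ≤ (L/2 + β/α)‖d‖² + (C_H + ξ)‖d‖^{1+ζ}. -/

import Mathlib

open scoped RealInnerProductSpace

open Set in
lemma taylor_grad_aux {E : Type*} [NormedAddCommGroup E] [NormedSpace ℝ E]
    (g : E → E) (hg : Differentiable ℝ g) (L : ℝ) (hL : 0 ≤ L)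
    (hLip : ∀ y z, ‖fderiv ℝ g y - fderiv ℝ g z‖ ≤ L * ‖y - z‖) (x d : E) :
    ‖g (x + d) - g x - fderiv ℝ g x d‖ ≤ L / 2 * ‖d‖ ^ 2 := by
  set v := fderiv ℝ g x d with hv
  have hderiv : ∀ t : ℝ, HasDerivAt (fun t : ℝ => g (x + t • d) - g x - t • v)
      (fderiv ℝ g (x + t • d) d - v) t := by
    intro t
    have h1 : HasDerivAt (fun t : ℝ => x + t • d) d t := by
      simpa using ((hasDerivAt_id t).smul_const d).const_add x
    have h2 : HasDerivAt (fun t : ℝ => g (x + t • d)) (fderiv ℝ g (x + t • d) d) t :=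
      (hg (x + t • d)).hasFDerivAt.comp_hasDerivAt t h1
    have h3 := (h2.sub_const (g x)).sub ((hasDerivAt_id t).smul_const v)
    simp only [one_smul] at h3
    exact h3
  have key := image_norm_le_of_norm_deriv_right_le_deriv_boundary
    (f := fun t : ℝ => g (x + t • d) - g x - t • v)
    (f' := fun t : ℝ => fderiv ℝ g (x + t • d) d - v)
    (a := 0) (b := 1)
    (fun t _ => (hderiv t).continuousAt.continuousWithinAt)
    (fun t _ => (hderiv t).hasDerivWithinAt)
    (B := fun t => L * ‖d‖ ^ 2 * (t ^ 2 / 2)) (B' := fun t => L * ‖d‖ ^ 2 * t)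
    (by simp)
    (fun t => by
      simpa using ((hasDerivAt_pow 2 t).div_const 2).const_mul (L * ‖d‖ ^ 2))
    (fun t ht => by
      have h1 : ‖fderiv ℝ g (x + t • d) d - v‖ ≤ ‖fderiv ℝ g (x + t • d) - fderiv ℝ g x‖ * ‖d‖ := by
        rw [hv]
        calc ‖fderiv ℝ g (x + t • d) d - fderiv ℝ g x d‖
            = ‖(fderiv ℝ g (x + t • d) - fderiv ℝ g x) d‖ := by simp
          _ ≤ ‖fderiv ℝ g (x + t • d) - fderiv ℝ g x‖ * ‖d‖ :=
            (fderiv ℝ g (x + t • d) - fderiv ℝ g x).le_opNorm d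
      have h2 : ‖fderiv ℝ g (x + t • d) - fderiv ℝ g x‖ ≤ L * (t * ‖d‖) := by
        have := hLip (x + t • d) x
        simpa [norm_smul, abs_of_nonneg ht.1] using this
      calc ‖fderiv ℝ g (x + t • d) d - v‖ ≤ (L * (t * ‖d‖)) * ‖d‖ :=
            h1.trans (by
              exact mul_le_mul_of_nonneg_right h2 (norm_nonneg d))
        _ = L * ‖d‖ ^ 2 * t := by ring)
  have := key (right_mem_Icc.2 zero_le_one)
  simpa [hv] using this.trans_eq (by ring)

theorem stmt17 (n : ℕ) (f : EuclideanSpace ℝ (Fin n) → ℝ) (L : ℝ) (hL : 0 < L)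
    (hf : ContDiff ℝ 2 f)
    (hLip : ∀ y z : EuclideanSpace ℝ (Fin n),
      ‖fderiv ℝ (gradient f) y - fderiv ℝ (gradient f) z‖ ≤ L * ‖y - z‖)
    (B : EuclideanSpace ℝ (Fin n) →L[ℝ] EuclideanSpace ℝ (Fin n))
    (hB : IsSelfAdjoint B)
    (x d r : EuclideanSpace ℝ (Fin n)) (lam β α ξ CH ζ : ℝ)
    (hlam : 0 ≤ lam) (hβ : 1 ≤ β) (hα : 0 < α) (hξ : 0 < ξ) (hCH : 0 < CH)
    (hζ : 0 < ζ) (hζ1 : ζ ≤ 1)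
    (hBd : ‖fderiv ℝ (gradient f) x d - B d‖ ≤ CH * ‖d‖ ^ (1 + ζ))
    (heq : gradient f x + (B d + lam • d) = r)
    (hshift : lam ≤ β * ‖d‖ / α)
    (hres : ‖r‖ ≤ ξ * ‖d‖ ^ (1 + ζ)) :
    ‖gradient f (x + d)‖ ≤ (L/2 + β/α) * ‖d‖^2 + (CH + ξ) * ‖d‖ ^ (1 + ζ) := by
  have hgrad_eq : gradient f = fun y =>
      (InnerProductSpace.toDual ℝ (EuclideanSpace ℝ (Fin n))).symm (fderiv ℝ f y) := rfl
  have hgdiff : Differentiable ℝ (gradient f) := by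
    rw [hgrad_eq]
    exact ((InnerProductSpace.toDual ℝ
      (EuclideanSpace ℝ (Fin n))).symm.contDiff.comp
      (hf.fderiv_right (m := 1) (by norm_num))).differentiable one_ne_zero
  have htaylor := taylor_grad_aux (gradient f) hgdiff L hL.le hLip x d
  have hdecomp : gradient f (x + d) =
      (gradient f (x + d) - gradient f x - fderiv ℝ (gradient f) x d)
      + (fderiv ℝ (gradient f) x d - B d) + r - lam • d := by
    rw [← heq]; abel
  have hlamd : ‖lam • d‖ ≤ β / α * ‖d‖ ^ 2 := by
    rw [norm_smul, Real.norm_eq_abs, abs_of_nonneg hlam]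
    calc lam * ‖d‖ ≤ (β * ‖d‖ / α) * ‖d‖ :=
          mul_le_mul_of_nonneg_right hshift (norm_nonneg d)
      _ = β / α * ‖d‖ ^ 2 := by ring
  calc ‖gradient f (x + d)‖
      ≤ ‖gradient f (x + d) - gradient f x - fderiv ℝ (gradient f) x d‖
        + ‖fderiv ℝ (gradient f) x d - B d‖ + ‖r‖ + ‖lam • d‖ := by
        conv_lhs => rw [hdecomp]
        exact (norm_sub_le _ _).trans (add_le_add norm_add₃_le le_rfl)
    _ ≤ L / 2 * ‖d‖ ^ 2 + CH * ‖d‖ ^ (1 + ζ) + ξ * ‖d‖ ^ (1 + ζ) + β / α * ‖d‖ ^ 2 := by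
        gcongr
    _ = (L/2 + β/α) * ‖d‖^2 + (CH + ξ) * ‖d‖ ^ (1 + ζ) := by ring
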